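/- Let n, m, l be natural numbers and let A ∈ ℂ^{n×n}, B ∈ ℂ^{n×m}, C ∈ ℂ^{l×n}. Then the (n+l)×(n+m) block matrix [[A, B],[C, 0]] has rank < n if and only if for every E ∈ ℂ^{m×n} and every K ∈ ℂ^{n×l}, rank(A + B·E + K·C) < n. -/

import Mathlib

open Matrix LinearMap

section helpers
variable {n m l : ℕ}

lemma vecMulVec_mulVec' (b χ x : Fin n → ℂ) :
    (Matrix.vecMulVec b χ) *ᵥ x = (χ ⬝ᵥ x) • b := by
  ext i
  simp [Matrix.mulVec, Matrix.vecMulVec, dotProduct, Finset.mul_sum, mul_assoc, mul_comm,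
    mul_left_comm]

lemma mul_vecMulVec' (B : Matrix (Fin n) (Fin m) ℂ) (y : Fin m → ℂ) (χ : Fin n → ℂ) :
    B * Matrix.vecMulVec y χ = Matrix.vecMulVec (B *ᵥ y) χ := by
  ext i j
  simp [Matrix.mul_apply, Matrix.vecMulVec, Matrix.mulVec, dotProduct, Finset.sum_mul, mul_assoc]

lemma vecMulVec_mul' (u : Fin n → ℂ) (φ : Fin l → ℂ) (C : Matrix (Fin l) (Fin n) ℂ) :
    Matrix.vecMulVec u φ * C = Matrix.vecMulVec u (φ ᵥ* C) := by
  ext i j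
  simp [Matrix.mul_apply, Matrix.vecMulVec, Matrix.vecMul, dotProduct, Finset.mul_sum, mul_assoc]

lemma exists_dual {k : ℕ} (v : Fin k → ℂ) (hv : v ≠ 0) : ∃ χ : Fin k → ℂ, χ ⬝ᵥ v = 1 := by
  obtain ⟨i, hi⟩ := Function.ne_iff.mp hv
  refine ⟨Pi.single i (v i)⁻¹, ?_⟩
  simp only [Pi.zero_apply] at hi
  simp [dotProduct, Pi.single_apply, Finset.sum_ite_eq, inv_mul_cancel₀ hi]

lemma rank_lt_rank_add_vecMulVec (A : Matrix (Fin n) (Fin n) ℂ) (b v χ : Fin n → ℂ)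
    (hv : A *ᵥ v = 0) (hχ : χ ⬝ᵥ v = 1) (hb : b ∉ LinearMap.range A.mulVecLin) :
    A.rank < (A + Matrix.vecMulVec b χ).rank := by
  have hmv : ∀ x, (A + Matrix.vecMulVec b χ) *ᵥ x = A *ᵥ x + (χ ⬝ᵥ x) • b := by
    intro x
    rw [Matrix.add_mulVec, vecMulVec_mulVec']
  have hsub : LinearMap.range A.mulVecLin <
      LinearMap.range (A + Matrix.vecMulVec b χ).mulVecLin := by
    constructor
    · rintro y ⟨z, rfl⟩
      refine ⟨z - (χ ⬝ᵥ z) • v, ?_⟩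
      simp only [Matrix.mulVecLin_apply, hmv]
      rw [dotProduct_sub, dotProduct_smul, hχ, smul_eq_mul, mul_one, sub_self, zero_smul,
        add_zero, Matrix.mulVec_sub, Matrix.mulVec_smul, hv, smul_zero, sub_zero]
    · intro hle
      apply hb
      apply hle
      refine ⟨v, ?_⟩
      simp only [Matrix.mulVecLin_apply, hmv, hv, hχ, one_smul, zero_add]
  exact Submodule.finrank_lt_finrank_of_lt hsub

lemma exists_ker_vec (A : Matrix (Fin n) (Fin n) ℂ) (h : A.rank < n) :
    ∃ v, v ≠ 0 ∧ A *ᵥ v = 0 := by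
  by_contra hc
  push_neg at hc
  have hinj : Function.Injective A.mulVecLin := by
    rw [← LinearMap.ker_eq_bot, LinearMap.ker_eq_bot']
    intro v hv
    by_contra hv0
    exact hc v hv0 hv
  have : A.rank = n := by
    rw [Matrix.rank, LinearMap.finrank_range_of_inj hinj]
    simp
  omega

lemma exists_not_range (A : Matrix (Fin n) (Fin n) ℂ) (h : A.rank < n) :
    ∃ u, u ∉ LinearMap.range A.mulVecLin := by
  by_contra hc
  push_neg at hc
  have : LinearMap.range A.mulVecLin = ⊤ := Submodule.eq_top_iff'.mpr hc
  have h2 : A.rank = n := by rw [Matrix.rank, this]; simp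
  omega

lemma rank_eq_of_ker_eq (A A' : Matrix (Fin n) (Fin n) ℂ)
    (h : ∀ w, A *ᵥ w = 0 ↔ A' *ᵥ w = 0) : A.rank = A'.rank := by
  have hk : LinearMap.ker A.mulVecLin = LinearMap.ker A'.mulVecLin := by
    ext w; simpa using h w
  have h1 := LinearMap.finrank_range_add_finrank_ker A.mulVecLin
  have h2 := LinearMap.finrank_range_add_finrank_ker A'.mulVecLin
  rw [hk] at h1
  rw [Matrix.rank, Matrix.rank]
  omega

lemma rank_fromBlocks_feedback (A : Matrix (Fin n) (Fin n) ℂ) (B : Matrix (Fin n) (Fin m) ℂ)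
    (C : Matrix (Fin l) (Fin n) ℂ) (E : Matrix (Fin m) (Fin n) ℂ) (K : Matrix (Fin n) (Fin l) ℂ) :
    (Matrix.fromBlocks (A + B * E + K * C) B C 0).rank = (Matrix.fromBlocks A B C 0).rank := by
  have h1 : Matrix.fromBlocks (A + B * E + K * C) B C (0 : Matrix (Fin l) (Fin m) ℂ) =
      Matrix.fromBlocks (1 : Matrix (Fin n) (Fin n) ℂ) K 0 (1 : Matrix (Fin l) (Fin l) ℂ) *
        Matrix.fromBlocks A B C 0 *
        Matrix.fromBlocks (1 : Matrix (Fin n) (Fin n) ℂ) 0 E (1 : Matrix (Fin m) (Fin m) ℂ) := by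
    simp only [Matrix.fromBlocks_multiply, Matrix.one_mul, Matrix.mul_one, Matrix.zero_mul,
      Matrix.mul_zero, add_zero, zero_add]
    abel_nf
  rw [h1, Matrix.rank_mul_eq_left_of_isUnit_det, Matrix.rank_mul_eq_right_of_isUnit_det]
  · rw [Matrix.det_fromBlocks_zero₂₁]; simp
  · rw [Matrix.det_fromBlocks_zero₁₂]; simp

lemma rank_topLeft_le (M : Matrix (Fin n) (Fin n) ℂ) (B : Matrix (Fin n) (Fin m) ℂ)
    (C : Matrix (Fin l) (Fin n) ℂ) :
    M.rank ≤ (Matrix.fromBlocks M B C 0).rank := by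
  have h : M = (Matrix.fromCols (1 : Matrix (Fin n) (Fin n) ℂ) (0 : Matrix (Fin n) (Fin l) ℂ) *
      Matrix.fromBlocks M B C 0) * Matrix.fromRows (1 : Matrix (Fin n) (Fin n) ℂ)
        (0 : Matrix (Fin m) (Fin n) ℂ) := by
    rw [Matrix.fromCols_mul_fromBlocks]
    rw [Matrix.fromCols_mul_fromRows]
    simp
  calc M.rank = _ := by rw [← h]
    _ ≤ (Matrix.fromCols (1 : Matrix (Fin n) (Fin n) ℂ) (0 : Matrix (Fin n) (Fin l) ℂ) *
        Matrix.fromBlocks M B C 0).rank := Matrix.rank_mul_le_left _ _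
    _ ≤ _ := Matrix.rank_mul_le_right _ _

lemma rank_fromBlocks_le (A : Matrix (Fin n) (Fin n) ℂ) (B : Matrix (Fin n) (Fin m) ℂ)
    (C : Matrix (Fin l) (Fin n) ℂ)
    (hker : ∀ v, A *ᵥ v = 0 → C *ᵥ v = 0)
    (X : Matrix (Fin n) (Fin m) ℂ) (hX1 : A * X = B) (hX2 : C * X = 0) :
    (Matrix.fromBlocks A B C 0).rank ≤ A.rank := by
  have h : Matrix.fromBlocks A B C (0 : Matrix (Fin l) (Fin m) ℂ) =
      Matrix.fromRows A C * Matrix.fromCols 1 X := by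
    rw [Matrix.fromRows_mul_fromCols, Matrix.mul_one, Matrix.mul_one, hX1, hX2]
  rw [h]
  calc (Matrix.fromRows A C * Matrix.fromCols 1 X).rank
      ≤ (Matrix.fromRows A C).rank := Matrix.rank_mul_le_left _ _
    _ ≤ A.rank := by
        have hk : LinearMap.ker (Matrix.fromRows A C).mulVecLin = LinearMap.ker A.mulVecLin := by
          ext v
          simp only [LinearMap.mem_ker, Matrix.mulVecLin_apply, Matrix.fromRows_mulVec]
          constructor
          · intro hv
            ext i
            have := congrFun hv (Sum.inl i)
            simpa using this
          · intro hv
            have hc := hker v hv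
            rw [hv, hc]
            simp
        have h1 := LinearMap.finrank_range_add_finrank_ker (Matrix.fromRows A C).mulVecLin
        have h2 := LinearMap.finrank_range_add_finrank_ker A.mulVecLin
        rw [hk] at h1
        rw [Matrix.rank, Matrix.rank]
        omega

/-- key structural lemma: at a rank maximizer, block rank is bounded by rank A -/
lemma key_lemma (A : Matrix (Fin n) (Fin n) ℂ) (B : Matrix (Fin n) (Fin m) ℂ)
    (C : Matrix (Fin l) (Fin n) ℂ)
    (hmax : ∀ (E : Matrix (Fin m) (Fin n) ℂ) (K : Matrix (Fin n) (Fin l) ℂ),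
      (A + B * E + K * C).rank ≤ A.rank)
    (hlt : A.rank < n) :
    (Matrix.fromBlocks A B C 0).rank ≤ A.rank := by
  -- kernel condition
  have hker : ∀ v, A *ᵥ v = 0 → C *ᵥ v = 0 := by
    intro v hv
    by_contra hCv
    obtain ⟨u, hu⟩ := exists_not_range A hlt
    obtain ⟨φ, hφ⟩ := exists_dual (C *ᵥ v) hCv
    have hχ : (φ ᵥ* C) ⬝ᵥ v = 1 := by
      rw [← Matrix.dotProduct_mulVec]
      exact hφ
    have h1 := rank_lt_rank_add_vecMulVec A u v (φ ᵥ* C) hv hχ hu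
    have h2 := hmax 0 (Matrix.vecMulVec u φ)
    rw [Matrix.mul_zero, add_zero, vecMulVec_mul'] at h2
    omega
  -- solvability condition
  have hsolv : ∀ y : Fin m → ℂ, ∃ x, A *ᵥ x = B *ᵥ y ∧ C *ᵥ x = 0 := by
    intro y
    set b := B *ᵥ y with hbdef
    by_cases hb : b ∈ LinearMap.range A.mulVecLin
    · obtain ⟨x0, hx0⟩ := hb
      rw [Matrix.mulVecLin_apply] at hx0
      by_cases hC : C *ᵥ x0 = 0
      · exact ⟨x0, hx0, hC⟩
      · exfalso
        obtain ⟨u, hu⟩ := exists_not_range A hlt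
        obtain ⟨φ, hφ⟩ := exists_dual (C *ᵥ x0) hC
        set A' := A + Matrix.vecMulVec u (φ ᵥ* C) with hA'def
        have hA'mv : ∀ w, A' *ᵥ w = A *ᵥ w + (φ ⬝ᵥ (C *ᵥ w)) • u := by
          intro w
          rw [hA'def, Matrix.add_mulVec, vecMulVec_mulVec', Matrix.dotProduct_mulVec]
        -- kernels agree
        have hkerA' : ∀ w, A' *ᵥ w = 0 ↔ A *ᵥ w = 0 := by
          intro w
          rw [hA'mv]
          constructor
          · intro hw
            by_cases hc : φ ⬝ᵥ (C *ᵥ w) = 0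
            · rwa [hc, zero_smul, add_zero] at hw
            · exfalso
              apply hu
              refine ⟨(-(φ ⬝ᵥ (C *ᵥ w))⁻¹) • w, ?_⟩
              rw [Matrix.mulVecLin_apply, Matrix.mulVec_smul,
                eq_neg_of_add_eq_zero_left hw]
              match_scalars
              field_simp
          · intro hw
            rw [hw, hker w hw]
            simp
        have hrank' : A'.rank = A.rank := rank_eq_of_ker_eq A' A (fun w => by rw [hkerA' w])
        -- b not in range of A'
        have hb' : b ∉ LinearMap.range A'.mulVecLin := by
          rintro ⟨x, hx⟩
          rw [Matrix.mulVecLin_apply, hA'mv] at hx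
          by_cases hc : φ ⬝ᵥ (C *ᵥ x) = 0
          · rw [hc, zero_smul, add_zero] at hx
            have hxx0 : A *ᵥ (x - x0) = 0 := by
              rw [Matrix.mulVec_sub, hx, hx0, sub_self]
            have hCx : C *ᵥ x = C *ᵥ x0 := by
              have := hker _ hxx0
              rw [Matrix.mulVec_sub] at this
              linear_combination (norm := module) this
            rw [hCx, hφ] at hc
            exact one_ne_zero hc
          · apply hu
            refine ⟨(φ ⬝ᵥ (C *ᵥ x))⁻¹ • (x0 - x), ?_⟩
            rw [Matrix.mulVecLin_apply, Matrix.mulVec_smul, Matrix.mulVec_sub, hx0]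
            have hben : b - A *ᵥ x = (φ ⬝ᵥ (C *ᵥ x)) • u := by
              rw [← hx]; abel
            rw [hben, smul_smul, inv_mul_cancel₀ hc, one_smul]
        -- find kernel vector of A'
        have hlt' : A'.rank < n := by rw [hrank']; exact hlt
        obtain ⟨v, hv0, hv⟩ := exists_ker_vec A' hlt'
        obtain ⟨χ, hχ⟩ := exists_dual v hv0
        have h1 := rank_lt_rank_add_vecMulVec A' b v χ hv hχ hb'
        have h2 := hmax (Matrix.vecMulVec y χ) (Matrix.vecMulVec u φ)
        rw [mul_vecMulVec', vecMulVec_mul', ← hbdef] at h2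
        have heq : A' + Matrix.vecMulVec b χ
            = A + Matrix.vecMulVec b χ + Matrix.vecMulVec u (φ ᵥ* C) := by
          rw [hA'def]; abel
        rw [heq] at h1
        omega
    · exfalso
      obtain ⟨v, hv0, hv⟩ := exists_ker_vec A hlt
      obtain ⟨χ, hχ⟩ := exists_dual v hv0
      have h1 := rank_lt_rank_add_vecMulVec A b v χ hv hχ hb
      have h2 := hmax (Matrix.vecMulVec y χ) 0
      rw [Matrix.zero_mul, add_zero, mul_vecMulVec', ← hbdef] at h2
      omega
  -- build the solution matrix X
  let X : Matrix (Fin n) (Fin m) ℂ :=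
    Matrix.of fun i j => (hsolv (Pi.single j 1)).choose i
  have hX1 : A * X = B := by
    ext i j
    have hc := (hsolv (Pi.single j 1)).choose_spec.1
    have h1 : (A * X) i j = (A *ᵥ (hsolv (Pi.single j 1)).choose) i := by
      simp [Matrix.mul_apply, Matrix.mulVec, dotProduct, X]
    rw [h1, hc]
    simp [Matrix.mulVec, dotProduct, Pi.single_apply]
  have hX2 : C * X = 0 := by
    ext i j
    have hc := (hsolv (Pi.single j 1)).choose_spec.2
    have h1 : (C * X) i j = (C *ᵥ (hsolv (Pi.single j 1)).choose) i := by
      simp [Matrix.mul_apply, Matrix.mulVec, dotProduct, X]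
    rw [h1, hc]
    simp
  exact rank_fromBlocks_le A B C hker X hX1 hX2

end helpers

/-- rank of the block matrix [[A,B],[C,0]] is < n iff
rank (A + B·E + K·C) < n for all E, K. -/
theorem block_rank_lt_iff_forall (n m l : ℕ)
    (A : Matrix (Fin n) (Fin n) ℂ) (B : Matrix (Fin n) (Fin m) ℂ)
    (C : Matrix (Fin l) (Fin n) ℂ) :
    (Matrix.fromBlocks A B C 0).rank < n ↔
      ∀ (E : Matrix (Fin m) (Fin n) ℂ) (K : Matrix (Fin n) (Fin l) ℂ),
        (A + B * E + K * C).rank < n := by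
  constructor
  · intro h E K
    calc (A + B * E + K * C).rank
        ≤ (Matrix.fromBlocks (A + B * E + K * C) B C 0).rank := rank_topLeft_le _ _ _
      _ = (Matrix.fromBlocks A B C 0).rank := rank_fromBlocks_feedback A B C E K
      _ < n := h
  · intro H
    -- choose a maximizer of the rank
    set S : Set ℕ := Set.range (fun p : (Matrix (Fin m) (Fin n) ℂ) × (Matrix (Fin n) (Fin l) ℂ) =>
      (A + B * p.1 + p.2 * C).rank) with hS
    have hne : S.Nonempty :=
      ⟨(A + B * (0 : Matrix (Fin m) (Fin n) ℂ) + (0 : Matrix (Fin n) (Fin l) ℂ) * C).rank,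
        ⟨((0 : Matrix (Fin m) (Fin n) ℂ), (0 : Matrix (Fin n) (Fin l) ℂ)), rfl⟩⟩
    have hbdd : BddAbove S := by
      refine ⟨n, ?_⟩
      rintro s ⟨p, rfl⟩
      exact le_of_lt (H p.1 p.2)
    obtain ⟨⟨E0, K0⟩, hE0⟩ := Nat.sSup_mem hne hbdd
    set A' := A + B * E0 + K0 * C with hA'def
    have hmax : ∀ (E : Matrix (Fin m) (Fin n) ℂ) (K : Matrix (Fin n) (Fin l) ℂ),
        (A' + B * E + K * C).rank ≤ A'.rank := by
      intro E K
      have heq : A' + B * E + K * C = A + B * (E0 + E) + (K0 + K) * C := by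
        rw [hA'def, Matrix.mul_add, Matrix.add_mul]
        abel
      simp only at hE0
      rw [heq, hA'def, hE0]
      exact le_csSup hbdd ⟨(E0 + E, K0 + K), rfl⟩
    have hlt : A'.rank < n := H E0 K0
    have h1 : (Matrix.fromBlocks A' B C 0).rank ≤ A'.rank := key_lemma A' B C hmax hlt
    have h2 : (Matrix.fromBlocks A' B C 0).rank = (Matrix.fromBlocks A B C 0).rank :=
      rank_fromBlocks_feedback A B C E0 K0
    omega
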